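/- arXiv:math/0609217 — 2 statements merged into one kernel-verified Lean document; each statement's English description precedes it below -/
import Mathlib

section
/- Let S be a finite nonempty set of points in R^n with nonnegative coordinates, and let N be the convex hull of the sets S_a = {x ∈ R^n : x_i ≥ a_i for all i} for a ∈ S. Let x = (x_1,...,x_n) satisfy 0 < x_i < 1 for all i. Then for every w ∈ N there exists an extreme point v of N such that x^w ≤ x^v, where x^w denotes x_1^{w_1}···x_n^{w_n}. -/
/-- Lemma 3.1: for x in the open unit cube and w in the Newton polyhedron generated by S,
there is an extreme point v with x^w ≤ x^v. -/
theorem stmt2 (n : ℕ) (S : Finset (Fin n → ℝ)) (hS : S.Nonempty)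
    (hnn : ∀ a ∈ S, ∀ i, 0 ≤ a i)
    (N : Set (Fin n → ℝ))
    (hN : N = convexHull ℝ (⋃ a ∈ S, {x : Fin n → ℝ | ∀ i, a i ≤ x i}))
    (x : Fin n → ℝ) (hx : ∀ i, x i ∈ Set.Ioo (0 : ℝ) 1)
    (w : Fin n → ℝ) (hw : w ∈ N) :
    ∃ v ∈ Set.extremePoints ℝ N, (∏ i, x i ^ w i) ≤ ∏ i, x i ^ v i := by
  classical
  set c : Fin n → ℝ := fun i => -Real.log (x i) with hc
  have hcpos : ∀ i, 0 < c i := fun i =>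
    neg_pos.2 (Real.log_neg (hx i).1 (hx i).2)
  set f : (Fin n → ℝ) → ℝ := fun y => ∑ i, c i * y i with hf
  have hflin : ∀ (a b : ℝ) (y z : Fin n → ℝ),
      f (a • y + b • z) = a * f y + b * f z := by
    intro a b y z
    simp only [hf, Finset.mul_sum, ← Finset.sum_add_distrib]
    refine Finset.sum_congr rfl fun i _ => ?_
    simp [Pi.add_apply, Pi.smul_apply, smul_eq_mul]
    ring
  have hfmono : ∀ y z : Fin n → ℝ, (∀ i, y i ≤ z i) → f y ≤ f z := by
    intro y z h
    exact Finset.sum_le_sum fun i _ => mul_le_mul_of_nonneg_left (h i) (hcpos i).le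
  have hfeq : ∀ y z : Fin n → ℝ, (∀ i, y i ≤ z i) → f z ≤ f y → z = y := by
    intro y z h hle
    funext i
    by_contra hne
    have hlt : y i < z i := lt_of_le_of_ne (h i) (Ne.symm hne)
    have : f y < f z := by
      refine Finset.sum_lt_sum (fun j _ => mul_le_mul_of_nonneg_left (h j) (hcpos j).le)
        ⟨i, Finset.mem_univ i, ?_⟩
      exact mul_lt_mul_of_pos_left hlt (hcpos i)
    linarith
  set K : Set (Fin n → ℝ) := convexHull ℝ (S : Set (Fin n → ℝ)) with hK
  -- every element of N dominates some element of K
  have hdom : ∀ y ∈ N, ∃ p ∈ K, ∀ i, p i ≤ y i := by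
    have : N ⊆ {y | ∃ p ∈ K, ∀ i, p i ≤ y i} := by
      rw [hN]
      apply convexHull_min
      · rintro y hy
        simp only [Set.mem_iUnion] at hy
        obtain ⟨a, haS, hay⟩ := hy
        exact ⟨a, subset_convexHull ℝ _ haS, hay⟩
      · rintro y1 ⟨p1, hp1, h1⟩ y2 ⟨p2, hp2, h2⟩ a b ha hb hab
        refine ⟨a • p1 + b • p2, (convex_convexHull ℝ _) hp1 hp2 ha hb hab, fun i => ?_⟩
        simp only [Pi.add_apply, Pi.smul_apply, smul_eq_mul]
        have := mul_le_mul_of_nonneg_left (h1 i) ha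
        have := mul_le_mul_of_nonneg_left (h2 i) hb
        linarith
    exact fun y hy => this hy
  -- minimizer of f over K
  have hKcomp : IsCompact K := S.finite_toSet.isCompact_convexHull ℝ
  have hKne : K.Nonempty := hS.to_set.mono (subset_convexHull ℝ _)
  have hfcont : Continuous f := by
    exact continuous_finset_sum _ fun i _ => continuous_const.mul (continuous_apply i)
  obtain ⟨p0, hp0K, hp0min⟩ := hKcomp.exists_isMinOn hKne hfcont.continuousOn
  set m : ℝ := f p0 with hm
  -- m is a lower bound on f over N
  have hNlb : ∀ y ∈ N, m ≤ f y := by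
    intro y hy
    obtain ⟨p, hpK, hp⟩ := hdom y hy
    exact le_trans (hp0min hpK) (hfmono p y hp)
  -- points of N achieving m lie in K
  have hachieve : ∀ y ∈ N, f y = m → y ∈ K ∧ f y = m := by
    intro y hy hfy
    obtain ⟨p, hpK, hp⟩ := hdom y hy
    have : f y ≤ f p := by rw [hfy]; exact hp0min hpK
    have := hfeq p y hp this
    exact ⟨this ▸ hpK, hfy⟩
  set F : Set (Fin n → ℝ) := K ∩ {y | f y = m} with hF
  have hFcomp : IsCompact F :=
    hKcomp.inter_right (isClosed_eq hfcont continuous_const)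
  have hFconv : Convex ℝ F := by
    refine (convex_convexHull ℝ _).inter ?_
    rintro y1 hy1 y2 hy2 a b ha hb hab
    simp only [Set.mem_setOf_eq] at *
    rw [hflin, hy1, hy2, ← add_mul, hab, one_mul]
  have hFne : F.Nonempty := ⟨p0, hp0K, rfl⟩
  obtain ⟨v, hvF, hvext⟩ := hFcomp.extremePoints_nonempty hFne
  -- K ⊆ N
  have hKN : K ⊆ N := by
    rw [hN, hK]
    apply convexHull_mono
    intro a ha
    simp only [Set.mem_iUnion]
    exact ⟨a, ha, fun i => le_refl _⟩
  have hvN : v ∈ N := hKN hvF.1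
  -- f y = m from segment condition
  refine ⟨v, ?_, ?_⟩
  · rw [mem_extremePoints]
    refine ⟨hvN, fun y1 hy1 y2 hy2 hseg => ?_⟩
    obtain ⟨a, b, ha, hb, hab, habv⟩ := hseg
    have h1 := hNlb y1 hy1
    have h2 := hNlb y2 hy2
    have hsum : a * f y1 + b * f y2 = m := by
      have : f v = m := hvF.2
      rw [← habv, hflin] at this
      exact this
    have hm' : a * m + b * m = m := by rw [← add_mul, hab, one_mul]
    have hfy1 : f y1 = m := by
      have h3 : a * f y1 ≤ a * m := by
        linarith [mul_le_mul_of_nonneg_left h2 hb.le]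
      exact le_antisymm (le_of_mul_le_mul_left h3 ha) h1
    have hfy2 : f y2 = m := by
      have h3 : b * f y2 ≤ b * m := by
        linarith [mul_le_mul_of_nonneg_left h1 ha.le]
      exact le_antisymm (le_of_mul_le_mul_left h3 hb) h2
    have hy1F : y1 ∈ F := hachieve y1 hy1 hfy1
    have hy2F : y2 ∈ F := hachieve y2 hy2 hfy2
    exact ⟨hvext hy1F hy2F ⟨a, b, ha, hb, hab, habv⟩,
      hvext hy2F hy1F ⟨b, a, hb, ha, by rw [add_comm]; exact hab, by rw [add_comm]; exact habv⟩⟩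
  · -- inequality of products
    have hfv : f v ≤ f w := hvF.2 ▸ hNlb w hw
    have key : ∑ i, w i * Real.log (x i) ≤ ∑ i, v i * Real.log (x i) := by
      have : ∑ i, c i * v i ≤ ∑ i, c i * w i := hfv
      have h1 : ∑ i, w i * Real.log (x i) = -∑ i, c i * w i := by
        rw [← Finset.sum_neg_distrib]
        refine Finset.sum_congr rfl fun i _ => by simp [hc]; ring
      have h2 : ∑ i, v i * Real.log (x i) = -∑ i, c i * v i := by
        rw [← Finset.sum_neg_distrib]
        refine Finset.sum_congr rfl fun i _ => by simp [hc]; ring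
      rw [h1, h2]
      linarith
    have hprod : ∀ u : Fin n → ℝ, (∏ i, x i ^ u i) = Real.exp (∑ i, u i * Real.log (x i)) := by
      intro u
      rw [Real.exp_sum]
      refine Finset.prod_congr rfl fun i _ => ?_
      rw [Real.rpow_def_of_pos (hx i).1]
      ring_nf
    rw [hprod, hprod]
    exact Real.exp_le_exp.2 key
end

section
/- Let v_0, v_1, ..., v_n ∈ R^n be points such that v_1 − v_0, ..., v_n − v_0 are linearly independent. Suppose x ∈ (0,1)^n and C > 1 are such that C^{-1} ≤ x^{v_l}/x^{v_0} ≤ C for all l = 1,...,n, where x^v = ∏_i x_i^{v_i}. Then there is a constant ε > 0, depending only on v_0,...,v_n and C (not on x), such that x_k ≥ ε for every coordinate k. -/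
/-- Lemma 3.3: if the monomials x^{v_l} for an affinely spanning family v_0,...,v_n are
pairwise comparable within a factor C, then x is bounded away from the coordinate
hyperplanes by a constant depending only on the v_l and C. -/
theorem stmt3 (n : ℕ) (v : Fin (n + 1) → (Fin n → ℝ))
    (hli : LinearIndependent ℝ (fun l : Fin n => v l.succ - v 0))
    (C : ℝ) (hC : 1 < C) :
    ∃ ε : ℝ, 0 < ε ∧ ∀ x : Fin n → ℝ, (∀ i, x i ∈ Set.Ioo (0 : ℝ) 1) →
      (∀ l : Fin n,
        C⁻¹ ≤ (∏ i, x i ^ v l.succ i) / (∏ i, x i ^ v 0 i) ∧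
        (∏ i, x i ^ v l.succ i) / (∏ i, x i ^ v 0 i) ≤ C) →
      ∀ k, ε ≤ x k := by
  set A : Matrix (Fin n) (Fin n) ℝ := Matrix.of (fun l i => v l.succ i - v 0 i) with hA
  have hrows : LinearIndependent ℝ (fun l => A l) := by
    convert hli using 1
    funext l; ext i; simp [hA]
  have hunit : IsUnit A := Matrix.linearIndependent_rows_iff_isUnit.mp hrows
  have hinv : A⁻¹ * A = 1 :=
    Matrix.nonsing_inv_mul A ((Matrix.isUnit_iff_isUnit_det A).mp hunit)
  set S : ℝ := ∑ k, ∑ l, |A⁻¹ k l| with hS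
  have hSnn : 0 ≤ S := Finset.sum_nonneg fun k _ =>
    Finset.sum_nonneg fun l _ => abs_nonneg _
  have hlogC : 0 < Real.log C := Real.log_pos hC
  refine ⟨Real.exp (-((S + 1) * Real.log C)), Real.exp_pos _, ?_⟩
  intro x hx hb k
  set y : Fin n → ℝ := fun i => Real.log (x i) with hy
  have hxpos : ∀ i, 0 < x i := fun i => (hx i).1
  have hlogP : ∀ l' : Fin (n + 1),
      Real.log (∏ i, x i ^ v l' i) = ∑ i, v l' i * y i := by
    intro l'
    rw [Real.log_prod (fun i _ => ne_of_gt (Real.rpow_pos_of_pos (hxpos i) _))]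
    exact Finset.sum_congr rfl fun i _ => Real.log_rpow (hxpos i) _
  have hAy : ∀ l, |(A.mulVec y) l| ≤ Real.log C := by
    intro l
    have hP : ∀ l' : Fin (n + 1), 0 < ∏ i, x i ^ v l' i := fun l' =>
      Finset.prod_pos fun i _ => Real.rpow_pos_of_pos (hxpos i) _
    have hb' := hb l
    have hratio :
        (A.mulVec y) l =
          Real.log ((∏ i, x i ^ v l.succ i) / (∏ i, x i ^ v 0 i)) := by
      rw [Real.log_div (ne_of_gt (hP _)) (ne_of_gt (hP _)), hlogP, hlogP,
        ← Finset.sum_sub_distrib]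
      simp [Matrix.mulVec, dotProduct, hA, sub_mul]
    rw [hratio, abs_le]
    constructor
    · calc -Real.log C = Real.log C⁻¹ := (Real.log_inv C).symm
        _ ≤ _ := Real.log_le_log (by positivity) hb'.1
    · exact Real.log_le_log (div_pos (hP _) (hP _)) hb'.2
  have hyk : y = A⁻¹.mulVec (A.mulVec y) := by
    rw [Matrix.mulVec_mulVec, hinv, Matrix.one_mulVec]
  have habs : |y k| ≤ S * Real.log C := by
    rw [hyk]
    calc |∑ l, A⁻¹ k l * (A.mulVec y) l|
        ≤ ∑ l, |A⁻¹ k l * (A.mulVec y) l| := Finset.abs_sum_le_sum_abs _ _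
      _ ≤ ∑ l, |A⁻¹ k l| * Real.log C := by
          refine Finset.sum_le_sum fun l _ => ?_
          rw [abs_mul]
          exact mul_le_mul_of_nonneg_left (hAy l) (abs_nonneg _)
      _ = (∑ l, |A⁻¹ k l|) * Real.log C := by rw [Finset.sum_mul]
      _ ≤ S * Real.log C := by
          refine mul_le_mul_of_nonneg_right ?_ hlogC.le
          exact Finset.single_le_sum
            (fun k' _ => Finset.sum_nonneg fun l _ => abs_nonneg (A⁻¹ k' l))
            (Finset.mem_univ k)
  have : -((S + 1) * Real.log C) ≤ y k := by
    have h1 : -(S * Real.log C) ≤ y k := neg_le_of_abs_le habs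
    nlinarith [hlogC]
  calc Real.exp (-((S + 1) * Real.log C)) ≤ Real.exp (y k) := Real.exp_le_exp.mpr this
    _ = x k := Real.exp_log (hxpos k)
end
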